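/- arXiv:1610.04972 — 7 statements merged into one kernel-verified Lean document; each statement's English description precedes it below -/
import Mathlib

section
/- If (α, β) is a Nash equilibrium of the classification game with P_N(v) > 0 for all v, then there is no v with α_v = 0 and π_d^β(v) > 0; i.e., every attack vector that receives positive detection probability is used by the attacker with positive probability. -/
open Finset

/-- A probability distribution on a finite type. -/
def IsProb {X : Type*} [Fintype X] (μ : X → ℝ) : Prop :=
  (∀ x, 0 ≤ μ x) ∧ ∑ x, μ x = 1

/-- Probability of detection of attack vector `v` under defender mixed strategy `β`. -/
noncomputable def pid {V C : Type*} [Fintype C] (cl : C → V → Bool)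
    (β : C → ℝ) (v : V) : ℝ :=
  ∑ c, if cl c v then β c else 0

/-- Attacker's expected payoff: U^A(v,c) = R(v) − c_d·1[c(v)=1], bilinearly extended. -/
noncomputable def UA {V C : Type*} [Fintype V] [Fintype C] (cl : C → V → Bool)
    (R : V → ℝ) (cd : ℝ) (α : V → ℝ) (β : C → ℝ) : ℝ :=
  ∑ v, ∑ c, α v * (R v - cd * (if cl c v then 1 else 0)) * β c

/-- Defender's expected payoff:
U^D(v,c) = −U^A(v,c) − ((1−p)/p)·c_fa·Σ_{v'} P_N(v')·1[c(v')=1]. -/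
noncomputable def UD {V C : Type*} [Fintype V] [Fintype C] (cl : C → V → Bool)
    (R : V → ℝ) (PN : V → ℝ) (cd cfa p : ℝ) (α : V → ℝ) (β : C → ℝ) : ℝ :=
  ∑ v, ∑ c, α v *
    (-(R v - cd * (if cl c v then 1 else 0))
      - (1 - p) / p * cfa * ∑ v', PN v' * (if cl c v' then 1 else 0)) * β c

/-- Nash equilibrium of the classification game. -/
def IsNash {V C : Type*} [Fintype V] [Fintype C] (cl : C → V → Bool) (R : V → ℝ)
    (PN : V → ℝ) (cd cfa p : ℝ) (α : V → ℝ) (β : C → ℝ) : Prop :=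
  IsProb α ∧ IsProb β ∧
  (∀ α', IsProb α' → UA cl R cd α' β ≤ UA cl R cd α β) ∧
  (∀ β', IsProb β' → UD cl R PN cd cfa p α β' ≤ UD cl R PN cd cfa p α β)

/-- at a Nash equilibrium (full classifier space, full-support non-attacker),
no attack vector unused by the attacker receives positive detection probability. -/
theorem no_detection_on_unused_vectors
    {V : Type*} [Fintype V] [DecidableEq V]
    (R : V → ℝ) (PN : V → ℝ) (cd cfa p : ℝ)
    (hR : ∀ v, 0 ≤ R v) (hcd : 0 < cd) (hcfa : 0 < cfa) (hp : 0 < p) (hp1 : p < 1)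
    (hPN : ∀ v, 0 < PN v) (hPN1 : ∑ v, PN v = 1)
    (α : V → ℝ) (β : (V → Bool) → ℝ)
    (hne : IsNash (fun c v => c v) R PN cd cfa p α β) :
    ¬ ∃ v, α v = 0 ∧ 0 < pid (fun c v => c v) β v := by
  rintro ⟨v, hα0, hpidpos⟩
  obtain ⟨⟨hαnn, hα1⟩, ⟨hβnn, hβ1⟩, -, hB⟩ := hne
  classical
  set K0 : ℝ := (1 - p) / p * cfa * PN v with hK0
  have hK0pos : 0 < K0 := by
    apply mul_pos (mul_pos (div_pos (by linarith) hp) hcfa) (hPN v)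
  set T : (V → Bool) → (V → Bool) := fun c w => if w = v then false else c w with hTdef
  set β' : (V → Bool) → ℝ := fun c => ∑ c', if T c' = c then β c' else 0 with hβ'def
  set A : V → (V → Bool) → ℝ := fun u c =>
    -(R u - cd * (if c u then 1 else 0))
      - (1 - p) / p * cfa * ∑ w, PN w * (if c w then 1 else 0) with hAdef
  have hpush : ∀ H : (V → Bool) → ℝ, ∑ c, β' c * H c = ∑ c, β c * H (T c) := by
    intro H
    simp only [hβ'def, Finset.sum_mul, ite_mul, zero_mul]
    rw [Finset.sum_comm]
    simp [Finset.sum_ite_eq]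
  have hβ'prob : IsProb β' := by
    constructor
    · intro c
      apply Finset.sum_nonneg
      intro c' _
      split
      · exact hβnn c'
      · exact le_refl 0
    · have h := hpush (fun _ => 1)
      simpa [hβ1] using h
  have hUD : ∀ γ : (V → Bool) → ℝ, UD (fun c v => c v) R PN cd cfa p α γ
      = ∑ c, γ c * (∑ u, α u * A u c) := by
    intro γ
    unfold UD
    rw [Finset.sum_comm]
    refine Finset.sum_congr rfl fun c _ => ?_
    conv_rhs => rw [Finset.mul_sum]
    exact Finset.sum_congr rfl fun u _ => by simp only [hAdef]; ring
  have hHT : ∀ c, (∑ u, α u * A u (T c)) = (∑ u, α u * A u c) + K0 * (if c v then 1 else 0) := by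
    intro c
    have hS : ∑ w, PN w * (if T c w then 1 else 0)
        = (∑ w, PN w * (if c w then 1 else 0)) - PN v * (if c v then 1 else 0) := by
      have h1 : ∑ w, (PN w * (if c w then 1 else 0) - PN w * (if T c w then 1 else 0))
          = PN v * (if c v then 1 else 0) := by
        rw [Finset.sum_eq_single v]
        · simp [hTdef]
        · intro w _ hw
          simp [hTdef, hw]
        · simp
      rw [Finset.sum_sub_distrib] at h1
      linarith
    have hterm : ∀ u, α u * A u (T c)
        = α u * A u c + α u * (K0 * (if c v then 1 else 0)) := by
      intro u
      by_cases hu : u = v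
      · subst hu; rw [hα0]; ring
      · have hTu : T c u = c u := by simp [hTdef, hu]
        simp only [hAdef, hTu, hS, hK0]
        ring
    calc ∑ u, α u * A u (T c)
        = ∑ u, (α u * A u c + α u * (K0 * (if c v then 1 else 0))) :=
          Finset.sum_congr rfl fun u _ => hterm u
      _ = (∑ u, α u * A u c) + (∑ u, α u) * (K0 * (if c v then 1 else 0)) := by
          rw [Finset.sum_add_distrib, Finset.sum_mul]
      _ = (∑ u, α u * A u c) + K0 * (if c v then 1 else 0) := by rw [hα1]; ring
  have hkey := hB β' hβ'prob
  rw [hUD β', hUD β, hpush] at hkey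
  have hexp : ∑ c, β c * (∑ u, α u * A u (T c))
      = (∑ c, β c * (∑ u, α u * A u c)) + K0 * pid (fun c v => c v) β v := by
    unfold pid
    rw [Finset.mul_sum, ← Finset.sum_add_distrib]
    refine Finset.sum_congr rfl fun c _ => ?_
    rw [hHT c]
    by_cases hc : c v <;> simp [hc] <;> ring
  rw [hexp] at hkey
  have : 0 < K0 * pid (fun c v => c v) β v := mul_pos hK0pos hpidpos
  linarith
end

section
/- In any Nash equilibrium (α, β) of the classification game, for any v1, v2 with P_N(v1) > 0, P_N(v2) > 0, and R(v1) ≤ R(v2), the detection probabilities satisfy π_d^β(v1) ≤ π_d^β(v2). In particular, if P_N has full support, the equilibrium detection probability is a non-decreasing function of the attack reward. -/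
open Finset

/-- Defender's payoff to a pure classifier `c` (with attacker strategy `α`). -/
noncomputable def Faux {V : Type*} [Fintype V] (R PN : V → ℝ) (cd cfa p : ℝ)
    (α : V → ℝ) (c : V → Bool) : ℝ :=
  ∑ v, α v * (-(R v - cd * (if c v then 1 else 0))
      - (1 - p) / p * cfa * ∑ v', PN v' * (if c v' then 1 else 0))

/-- at a Nash equilibrium of the classification game (full classifier
space), the detection probability is non-decreasing in the attack reward on the
support of the non-attacker's distribution. -/
theorem detection_prob_monotone_in_reward
    {V : Type*} [Fintype V] [DecidableEq V]
    (R : V → ℝ) (PN : V → ℝ) (cd cfa p : ℝ)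
    (hR : ∀ v, 0 ≤ R v) (hcd : 0 < cd) (hcfa : 0 < cfa) (hp : 0 < p) (hp1 : p < 1)
    (hPN1 : ∑ v, PN v = 1) (hPN0 : ∀ v, 0 ≤ PN v)
    (α : V → ℝ) (β : (V → Bool) → ℝ)
    (hne : IsNash (fun c v => c v) R PN cd cfa p α β)
    (v1 v2 : V) (h1 : 0 < PN v1) (h2 : 0 < PN v2) (hRle : R v1 ≤ R v2) :
    pid (fun c v => c v) β v1 ≤ pid (fun c v => c v) β v2 := by
  obtain ⟨⟨hα0, hα1⟩, ⟨hβ0, hβ1⟩, hA, hD⟩ := hne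
  have hK : 0 < (1 - p) / p * cfa := mul_pos (div_pos (by linarith) hp) hcfa
  have hdd : ∀ v, pid (fun c v => c v) β v = ∑ c : V → Bool, if c v then β c else 0 :=
    fun v => rfl
  have hd0 : ∀ v, 0 ≤ pid (fun c v => c v) β v := by
    intro v; rw [hdd]
    exact Finset.sum_nonneg fun c _ => by by_cases h : c v <;> simp [h, hβ0 c]
  by_contra hcon
  push_neg at hcon
  set d : V → ℝ := pid (fun c v => c v) β with hd
  -- attacker step: α v1 = 0
  have hUA : ∀ γ : V → ℝ, UA (fun c v => c v) R cd γ β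
      = ∑ v, γ v * (R v - cd * d v) := by
    intro γ
    unfold UA
    refine Finset.sum_congr rfl fun v _ => ?_
    have h : ∑ c : V → Bool, γ v * (R v - cd * (if c v then 1 else 0)) * β c
        = γ v * R v * (∑ c : V → Bool, β c)
          - γ v * cd * ∑ c : V → Bool, (if c v then β c else 0) := by
      rw [Finset.mul_sum, Finset.mul_sum, ← Finset.sum_sub_distrib]
      refine Finset.sum_congr rfl fun c _ => ?_
      by_cases h : c v <;> simp [h] <;> ring
    rw [h, hβ1, ← hdd v]
    ring
  have hgap : R v1 - cd * d v1 < R v2 - cd * d v2 := by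
    have := mul_lt_mul_of_pos_left hcon hcd
    linarith
  have hne12 : v1 ≠ v2 := by rintro rfl; exact lt_irrefl _ hcon
  have hαv1 : α v1 = 0 := by
    set α' : V → ℝ := fun v =>
      α v + (if v = v2 then α v1 else 0) - (if v = v1 then α v1 else 0) with hα'
    have hα'p : IsProb α' := by
      constructor
      · intro v
        by_cases hv1 : v = v1
        · subst hv1; simp [hα', hne12]
        · by_cases hv2 : v = v2
          · simp [hα', hv1, hv2, Ne.symm hne12]
            linarith [hα0 v2, hα0 v1]
          · simp [hα', hv1, hv2]; exact hα0 v
      · rw [hα']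
        simp only [Finset.sum_sub_distrib, Finset.sum_add_distrib,
          Finset.sum_ite_eq', Finset.mem_univ, if_true, hα1]
        ring
    have hle := hA α' hα'p
    rw [hUA α', hUA α] at hle
    have hdiff : ∑ v, α' v * (R v - cd * d v) - ∑ v, α v * (R v - cd * d v)
        = α v1 * ((R v2 - cd * d v2) - (R v1 - cd * d v1)) := by
      rw [← Finset.sum_sub_distrib]
      have h : ∀ v ∈ Finset.univ, α' v * (R v - cd * d v) - α v * (R v - cd * d v)
          = (if v = v2 then α v1 * (R v - cd * d v) else 0)
            - (if v = v1 then α v1 * (R v - cd * d v) else 0) := by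
        intro v _
        by_cases hv1 : v = v1 <;> by_cases hv2 : v = v2 <;>
          simp [hα', hv1, hv2, hne12, Ne.symm hne12] <;> ring
      rw [Finset.sum_congr rfl h, Finset.sum_sub_distrib]
      simp only [Finset.sum_ite_eq', Finset.mem_univ, if_true]
      ring
    have hα1nn := hα0 v1
    nlinarith [hle, hdiff, hgap]
  -- defender step: pid v1 ≤ 0
  have hUD : ∀ γ : (V → Bool) → ℝ, UD (fun c v => c v) R PN cd cfa p α γ
      = ∑ c, Faux R PN cd cfa p α c * γ c := by
    intro γ
    unfold UD Faux
    rw [Finset.sum_comm]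
    refine Finset.sum_congr rfl fun c _ => ?_
    rw [Finset.sum_mul]
  set β' : (V → Bool) → ℝ :=
    fun c => ∑ c' : V → Bool, if Function.update c' v1 false = c then β c' else 0 with hβ'
  have hβ'p : IsProb β' := by
    constructor
    · intro c
      exact Finset.sum_nonneg fun c' _ => by split <;> simp [hβ0]
    · rw [hβ']
      rw [Finset.sum_comm]
      simp [Finset.sum_ite_eq, hβ1]
  have hUDβ' : UD (fun c v => c v) R PN cd cfa p α β'
      = ∑ c, Faux R PN cd cfa p α (Function.update c v1 false) * β c := by
    rw [hUD β']
    calc ∑ c, Faux R PN cd cfa p α c * β' c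
        = ∑ c, ∑ c' : V → Bool,
            if Function.update c' v1 false = c then Faux R PN cd cfa p α c * β c' else 0 := by
          refine Finset.sum_congr rfl fun c _ => ?_
          rw [hβ', Finset.mul_sum]
          exact Finset.sum_congr rfl fun c' _ => by split <;> simp
      _ = ∑ c' : V → Bool, ∑ c,
            if Function.update c' v1 false = c then Faux R PN cd cfa p α c * β c' else 0 :=
          Finset.sum_comm
      _ = ∑ c' : V → Bool, Faux R PN cd cfa p α (Function.update c' v1 false) * β c' := by
          refine Finset.sum_congr rfl fun c' _ => ?_
          simp [Finset.sum_ite_eq]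
  have hS : ∀ c : V → Bool,
      (∑ v', PN v' * (if (Function.update c v1 false) v' then 1 else 0))
      = (∑ v', PN v' * (if c v' then 1 else 0)) - PN v1 * (if c v1 then 1 else 0) := by
    intro c
    have h : ∀ v' ∈ Finset.univ, PN v' * (if Function.update c v1 false v' then 1 else 0)
        = PN v' * (if c v' then 1 else 0)
          - (if v' = v1 then PN v1 * (if c v1 then 1 else 0) else 0) := by
      intro v' _
      by_cases h : v' = v1
      · subst h; simp
      · simp [Function.update_of_ne h, h]
    rw [Finset.sum_congr rfl h, Finset.sum_sub_distrib]
    simp only [Finset.sum_ite_eq', Finset.mem_univ, if_true]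
  have hAc : ∀ c : V → Bool,
      (∑ v, α v * (if Function.update c v1 false v then 1 else 0))
      = ∑ v, α v * (if c v then 1 else 0) := by
    intro c
    refine Finset.sum_congr rfl fun v _ => ?_
    by_cases h : v = v1
    · subst h; simp [hαv1]
    · simp [Function.update_of_ne h]
  have hFexp : ∀ c : V → Bool, Faux R PN cd cfa p α c
      = (∑ v, α v * (-(R v)))
        + cd * (∑ v, α v * (if c v then 1 else 0))
        - (1 - p) / p * cfa * (∑ v', PN v' * (if c v' then 1 else 0)) := by
    intro c
    unfold Faux
    have h : ∀ v ∈ Finset.univ, α v * (-(R v - cd * (if c v then 1 else 0))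
          - (1 - p) / p * cfa * ∑ v', PN v' * (if c v' then 1 else 0))
        = α v * (-(R v)) + cd * (α v * (if c v then 1 else 0))
          - ((1 - p) / p * cfa * (∑ v', PN v' * (if c v' then 1 else 0))) * α v := by
      intro v _; ring
    rw [Finset.sum_congr rfl h, Finset.sum_sub_distrib, Finset.sum_add_distrib,
      ← Finset.mul_sum, ← Finset.mul_sum, hα1, mul_one]
  have hle2 := hD β' hβ'p
  rw [hUDβ', hUD β] at hle2
  have hkey : ∑ c, Faux R PN cd cfa p α (Function.update c v1 false) * β c
      - ∑ c, Faux R PN cd cfa p α c * β c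
      = (1 - p) / p * cfa * PN v1 * d v1 := by
    rw [← Finset.sum_sub_distrib]
    have h : ∀ c ∈ Finset.univ,
        Faux R PN cd cfa p α (Function.update c v1 false) * β c
          - Faux R PN cd cfa p α c * β c
        = (1 - p) / p * cfa * PN v1 * (if c v1 then β c else 0) := by
      intro c _
      rw [hFexp (Function.update c v1 false), hFexp c, hAc c, hS c]
      by_cases h : c v1 <;> simp [h] <;> ring
    rw [Finset.sum_congr rfl h, ← Finset.mul_sum, ← hdd v1]
  have hd1 : d v1 ≤ 0 := by nlinarith [hle2, hkey, mul_pos hK h1]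
  have := hd0 v2
  linarith [hcon, hd1, this]
end

section
/- In any Nash equilibrium (α, β) of the classification game, if v ∈ V satisfies 0 < π_d^β(v) < 1, then α_v = ((1−p)/p)·(c_fa/c_d)·P_N(v). That is, on attack vectors with nontrivial detection probability, the attacker's equilibrium distribution is a fixed scalar multiple of the non-attacker's distribution. -/
open Finset

/-- at a Nash equilibrium of the classification game (full classifier
space), on attack vectors with detection probability strictly between 0 and 1,
the attacker's equilibrium distribution is a scaled copy of the non-attacker's:
α_v = ((1−p)/p)·(c_fa/c_d)·P_N(v). -/
theorem attacker_mimics_nonattacker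
    {V : Type*} [Fintype V] [DecidableEq V]
    (R : V → ℝ) (PN : V → ℝ) (cd cfa p : ℝ)
    (hR : ∀ v, 0 ≤ R v) (hcd : 0 < cd) (hcfa : 0 < cfa) (hp : 0 < p) (hp1 : p < 1)
    (hPN1 : ∑ v, PN v = 1) (hPN0 : ∀ v, 0 ≤ PN v)
    (α : V → ℝ) (β : (V → Bool) → ℝ)
    (hne : IsNash (fun c v => c v) R PN cd cfa p α β)
    (v : V) (hlow : 0 < pid (fun c v => c v) β v) (hhigh : pid (fun c v => c v) β v < 1) :
    α v = (1 - p) / p * (cfa / cd) * PN v := by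
  obtain ⟨hα, hβ, _hA, hD⟩ := hne
  set q : ℝ := (1 - p) / p * cfa with hq
  have hq0 : 0 < q := mul_pos (div_pos (by linarith) hp) hcfa
  set W : (V → Bool) → ℝ := fun c => ∑ w, α w *
    (-(R w - cd * (if c w then 1 else 0))
      - (1 - p) / p * cfa * ∑ v', PN v' * (if c v' then 1 else 0)) with hWdef
  have hUD : ∀ γ : (V → Bool) → ℝ,
      UD (fun c v => c v) R PN cd cfa p α γ = ∑ c, W c * γ c := by
    intro γ
    rw [UD, Finset.sum_comm]
    refine Finset.sum_congr rfl fun c _ => ?_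
    rw [hWdef, Finset.sum_mul]
  have hWform : ∀ c : V → Bool, W c = -(∑ w, α w * R w)
      + cd * (∑ w, α w * (if c w then 1 else 0))
      - q * (∑ w, PN w * (if c w then 1 else 0)) := by
    intro c
    simp only [hWdef]
    have hterm : ∀ w : V, α w *
        (-(R w - cd * (if c w then 1 else 0))
          - (1 - p) / p * cfa * ∑ v', PN v' * (if c v' then 1 else 0))
        = -(α w * R w) + cd * (α w * (if c w then 1 else 0))
          - (q * ∑ v', PN v' * (if c v' then 1 else 0)) * α w := by
      intro w; rw [hq]; ring
    rw [Finset.sum_congr rfl (fun w _ => hterm w), Finset.sum_sub_distrib,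
      Finset.sum_add_distrib, Finset.sum_neg_distrib, ← Finset.mul_sum,
      ← Finset.mul_sum, hα.2, mul_one]
  have hkey : ∀ c : V → Bool,
      W (Function.update c v true) - W (Function.update c v false)
        = cd * α v - q * PN v := by
    intro c
    have hsum : ∀ (f : V → ℝ) (b : Bool),
        (∑ w, f w * (if Function.update c v b w then 1 else 0))
        = (if b then f v else 0)
          + ∑ w ∈ Finset.univ.erase v, f w * (if c w then 1 else 0) := by
      intro f b
      rw [← Finset.add_sum_erase _ _ (Finset.mem_univ v)]
      congr 1
      · rw [Function.update_self]; cases b <;> simp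
      · exact Finset.sum_congr rfl fun w hw => by
          rw [Function.update_of_ne (Finset.mem_erase.1 hw).1]
    rw [hWform, hWform, hsum α true, hsum α false, hsum PN true, hsum PN false]
    simp only [if_true, Bool.false_eq_true, if_false]
    ring
  -- support of β lies on the maximizers of W
  obtain ⟨cs, -, hcs⟩ := Finset.exists_max_image Finset.univ W Finset.univ_nonempty
  have hcs' : ∀ c, W c ≤ W cs := fun c => hcs c (Finset.mem_univ c)
  have hpoint : IsProb (fun c : V → Bool => if c = cs then (1:ℝ) else 0) :=
    ⟨fun c => by dsimp only; split <;> norm_num, by simp⟩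
  have h2 := hD _ hpoint
  rw [hUD, hUD] at h2
  have hUDpoint : (∑ c, W c * (if c = cs then (1:ℝ) else 0)) = W cs := by simp
  rw [hUDpoint] at h2
  have h1 : ∑ c, W c * β c ≤ W cs := by
    calc ∑ c, W c * β c ≤ ∑ c, W cs * β c :=
          Finset.sum_le_sum fun c _ => mul_le_mul_of_nonneg_right (hcs' c) (hβ.1 c)
      _ = W cs := by rw [← Finset.mul_sum, hβ.2, mul_one]
  have heq : ∑ c, W c * β c = W cs := le_antisymm h1 h2
  have hsupp : ∀ c, 0 < β c → W c = W cs := by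
    intro c hc
    by_contra hne'
    have hlt : W c < W cs := lt_of_le_of_ne (hcs' c) hne'
    have : ∑ c', W c' * β c' < W cs := by
      calc ∑ c', W c' * β c' < ∑ c', W cs * β c' :=
            Finset.sum_lt_sum
              (fun c' _ => mul_le_mul_of_nonneg_right (hcs' c') (hβ.1 c'))
              ⟨c, Finset.mem_univ c, mul_lt_mul_of_pos_right hlt hc⟩
        _ = W cs := by rw [← Finset.mul_sum, hβ.2, mul_one]
    linarith
  -- find classifiers in support detecting / not detecting v
  simp only [pid] at hlow hhigh
  have hc1 : ∃ c : V → Bool, c v = true ∧ 0 < β c := by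
    by_contra h
    push_neg at h
    have : (∑ c : V → Bool, if c v then β c else 0) ≤ 0 := by
      apply Finset.sum_nonpos
      intro c _
      split
      · exact h c (by assumption)
      · exact le_refl 0
    linarith
  have hsplit : (∑ c : V → Bool, if c v then β c else 0)
      + (∑ c : V → Bool, if c v then 0 else β c) = 1 := by
    rw [← Finset.sum_add_distrib, ← hβ.2]
    refine Finset.sum_congr rfl fun c _ => ?_
    split <;> ring
  have hc0 : ∃ c : V → Bool, c v = false ∧ 0 < β c := by
    by_contra h
    push_neg at h
    have : (∑ c : V → Bool, if c v then 0 else β c) ≤ 0 := by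
      apply Finset.sum_nonpos
      intro c _
      split
      · exact le_refl 0
      · exact h c (by simp_all)
    linarith
  obtain ⟨c1, hc1v, hc1β⟩ := hc1
  obtain ⟨c0, hc0v, hc0β⟩ := hc0
  have hu1 : Function.update c1 v true = c1 := by
    rw [← hc1v]; exact Function.update_eq_self v c1
  have hu0 : Function.update c0 v false = c0 := by
    rw [← hc0v]; exact Function.update_eq_self v c0
  have g1 : 0 ≤ cd * α v - q * PN v := by
    have h := hkey c1
    rw [hu1, hsupp c1 hc1β] at h
    have := hcs' (Function.update c1 v false)
    linarith
  have g0 : cd * α v - q * PN v ≤ 0 := by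
    have h := hkey c0
    rw [hu0, hsupp c0 hc0β] at h
    have := hcs' (Function.update c0 v true)
    linarith
  have hmain : cd * α v = q * PN v := by linarith
  rw [hq] at hmain
  have hcd' : cd ≠ 0 := ne_of_gt hcd
  field_simp at hmain ⊢
  linarith
end

section
/- With the defender's LP polyhedron P = {x : Λx ≥ 1, x ≥ 0} for the reduced classification game, any extreme point x of P corresponding to an equilibrium strategy satisfies: there is an index s such that x_i = 0 for i < s, x_i = ((r_i − r_{i−1})/c_d)·‖x‖ > 0 for s+1 ≤ i ≤ m, and not both x_s > 0 and x_{m+1} > 0. -/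
open Finset

/-- The defender's LP objective: min_i (Λβ)_i − μ'β. -/
noncomputable def lpObj (n : ℕ) (Λ : Fin (n+1) → Fin (n+2) → ℝ)
    (μ : Fin (n+2) → ℝ) (β : Fin (n+2) → ℝ) : ℝ :=
  (Finset.univ.inf' Finset.univ_nonempty fun i : Fin (n+1) => ∑ j, Λ i j * β j)
    - ∑ j, μ j * β j

/-- Membership in the polyhedron P = {x : Λx ≥ 1, x ≥ 0}. -/
def InPoly (n : ℕ) (Λ : Fin (n+1) → Fin (n+2) → ℝ) (x : Fin (n+2) → ℝ) : Prop :=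
  (∀ j, 0 ≤ x j) ∧ ∀ i, 1 ≤ ∑ j, Λ i j * x j

/-- `x` corresponds (via normalization β = x/‖x‖₁) to a defender Nash equilibrium
strategy, i.e. β maximizes min_i(Λβ)_i − μ'β over the simplex. -/
def CorrespondsToEq (n : ℕ) (Λ : Fin (n+1) → Fin (n+2) → ℝ)
    (μ : Fin (n+2) → ℝ) (x : Fin (n+2) → ℝ) : Prop :=
  0 < ∑ j, x j ∧
  ∀ β : Fin (n+2) → ℝ, (∀ j, 0 ≤ β j) → (∑ j, β j = 1) →
    lpObj n Λ μ β ≤ lpObj n Λ μ (fun j => x j / ∑ j', x j')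

/-- `x` is an extreme point of the polyhedron P: it lies in P and is not the
midpoint of two distinct points of P. -/
def ExtremePt (n : ℕ) (Λ : Fin (n+1) → Fin (n+2) → ℝ) (x : Fin (n+2) → ℝ) : Prop :=
  InPoly n Λ x ∧
  ¬ ∃ y z : Fin (n+2) → ℝ, InPoly n Λ y ∧ InPoly n Λ z ∧ y ≠ z ∧
      x = fun j => (y j + z j) / 2

/- auxiliary lemmas -/


lemma rowsplit (n : ℕ) (r : Fin (n+1) → ℝ) (cd ε : ℝ)
    (Λ : Fin (n+1) → Fin (n+2) → ℝ)
    (hΛ : ∀ i j, Λ i j =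
      cd * (if (j : ℕ) ≤ (i : ℕ) then 1 else 0) - r i + (r (Fin.last n) + ε))
    (i : Fin (n+1)) (v : Fin (n+2) → ℝ) :
    ∑ j, Λ i j * v j =
      cd * (∑ j : Fin (n+2), if (j : ℕ) ≤ (i : ℕ) then v j else 0)
        + (r (Fin.last n) + ε - r i) * ∑ j, v j := by
  have h : ∀ j : Fin (n+2), Λ i j * v j =
      cd * (if (j : ℕ) ≤ (i : ℕ) then v j else 0) + (r (Fin.last n) + ε - r i) * v j := by
    intro j; rw [hΛ]; split <;> ring
  rw [Finset.sum_congr rfl fun j _ => h j, Finset.sum_add_distrib, ← Finset.mul_sum,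
    ← Finset.mul_sum]

lemma psum_succ (n : ℕ) (x : Fin (n+2) → ℝ) (k : ℕ) (hk : k + 1 < n + 2) :
    (∑ j : Fin (n+2), if (j : ℕ) ≤ k + 1 then x j else 0)
      = (∑ j : Fin (n+2), if (j : ℕ) ≤ k then x j else 0) + x ⟨k+1, hk⟩ := by
  have : ∀ j : Fin (n+2), (if (j : ℕ) ≤ k + 1 then x j else 0)
      = (if (j : ℕ) ≤ k then x j else 0) + (if j = ⟨k+1, hk⟩ then x j else 0) := by
    intro j
    rcases Nat.lt_trichotomy (j : ℕ) (k+1) with h | h | h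
    · have h1 : (j : ℕ) ≤ k + 1 := by omega
      have h2 : (j : ℕ) ≤ k := by omega
      have h3 : j ≠ ⟨k+1, hk⟩ := by simp [Fin.ext_iff]; omega
      simp [h1, h2, h3]
    · have h3 : j = ⟨k+1, hk⟩ := by simp [Fin.ext_iff]; omega
      simp [h3]
    · have h1 : ¬ ((j : ℕ) ≤ k + 1) := by omega
      have h2 : ¬ ((j : ℕ) ≤ k) := by omega
      have h3 : j ≠ ⟨k+1, hk⟩ := by simp [Fin.ext_iff]; omega
      simp [h1, h2, h3]
  rw [Finset.sum_congr rfl fun j _ => this j, Finset.sum_add_distrib,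
    Finset.sum_ite_eq' univ (⟨k+1, hk⟩ : Fin (n+2)) x]
  simp

lemma psum_zero (n : ℕ) (x : Fin (n+2) → ℝ) :
    (∑ j : Fin (n+2), if (j : ℕ) ≤ 0 then x j else 0) = x 0 := by
  have : ∀ j : Fin (n+2), (if (j : ℕ) ≤ 0 then x j else 0)
      = (if j = 0 then x j else 0) := by
    intro j
    by_cases h : (j : ℕ) = 0
    · have h3 : j = 0 := by rw [Fin.ext_iff, h]; simp
      simp [h3]
    · have h1 : ¬ ((j : ℕ) ≤ 0) := by omega
      have h3 : ¬ (j = 0) := by rw [Fin.ext_iff]; simpa using h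
      simp [h1, h3]
  rw [Finset.sum_congr rfl fun j _ => this j,
    Finset.sum_ite_eq' univ (0 : Fin (n+2)) x]
  simp

lemma psum_last (n : ℕ) (x : Fin (n+2) → ℝ) :
    (∑ j : Fin (n+2), if (j : ℕ) ≤ n + 1 then x j else 0) = ∑ j, x j := by
  apply Finset.sum_congr rfl
  intro j _
  rw [if_pos (by omega)]

lemma psum_low (n : ℕ) (x : Fin (n+2) → ℝ) (k : ℕ)
    (h : ∀ j : Fin (n+2), (j : ℕ) ≤ k → x j = 0) :
    (∑ j : Fin (n+2), if (j : ℕ) ≤ k then x j else 0) = 0 := by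
  apply Finset.sum_eq_zero
  intro j _
  split_ifs with hj
  · exact h j hj
  · rfl

lemma Λdiff (n : ℕ) (r : Fin (n+1) → ℝ) (cd ε : ℝ)
    (Λ : Fin (n+1) → Fin (n+2) → ℝ)
    (hΛ : ∀ i j, Λ i j =
      cd * (if (j : ℕ) ≤ (i : ℕ) then 1 else 0) - r i + (r (Fin.last n) + ε))
    (i j0 : Fin (n+1)) :
    Λ i j0.castSucc - Λ i j0.succ = if (i : ℕ) = (j0 : ℕ) then cd else 0 := by
  rw [hΛ i j0.castSucc, hΛ i j0.succ]
  simp only [Fin.coe_castSucc, Fin.val_succ]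
  split_ifs <;> first | (exfalso; omega) | ring

lemma claimA (n : ℕ) (cd : ℝ) (hcd : 0 < cd)
    (μ : Fin (n+2) → ℝ) (hμ : ∀ j : Fin (n+1), μ j.succ < μ j.castSucc)
    (Λ : Fin (n+1) → Fin (n+2) → ℝ)
    (hΛd : ∀ i j0 : Fin (n+1), Λ i j0.castSucc - Λ i j0.succ =
      if (i : ℕ) = (j0 : ℕ) then cd else 0)
    (x : Fin (n+2) → ℝ) (hxnn : ∀ j, 0 ≤ x j) (hS : 0 < ∑ j, x j)
    (hopt : ∀ β : Fin (n+2) → ℝ, (∀ j, 0 ≤ β j) → (∑ j, β j = 1) →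
      lpObj n Λ μ β ≤ lpObj n Λ μ (fun j => x j / ∑ j', x j'))
    (j0 : Fin (n+1)) (hj0 : 0 < x j0.castSucc) (i : Fin (n+1)) :
    ∑ j, Λ j0 j * x j ≤ ∑ j, Λ i j * x j := by
  by_contra hlt
  push_neg at hlt
  set S := ∑ j, x j with hSdef
  set β : Fin (n+2) → ℝ := fun j => x j / S with hβ
  have hβnn : ∀ j, 0 ≤ β j := fun j => div_nonneg (hxnn j) hS.le
  have hβsum : ∑ j, β j = 1 := by
    rw [hβ, ← Finset.sum_div, div_self hS.ne']
  set g : Fin (n+1) → ℝ := fun i => ∑ j, Λ i j * β j with hg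
  have hgR : ∀ i, g i = (∑ j, Λ i j * x j) / S := by
    intro i
    simp only [hg, hβ, Finset.sum_div]
    congr 1; ext j; ring
  set m : ℝ := Finset.univ.inf' Finset.univ_nonempty g with hm
  obtain ⟨istar, -, histar⟩ := Finset.exists_mem_eq_inf' (Finset.univ_nonempty) g
  have hmle : ∀ k, m ≤ g k := fun k => Finset.inf'_le g (mem_univ k)
  have hgj0 : m < g j0 := by
    calc m ≤ g i := hmle i
    _ < g j0 := by
      rw [hgR, hgR]
      exact (div_lt_div_iff_of_pos_right hS).mpr hlt
  set δ : ℝ := min (β j0.castSucc) ((g j0 - m) / cd) with hδ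
  have hδpos : 0 < δ := by
    apply lt_min
    · exact div_pos hj0 hS
    · exact div_pos (by linarith) hcd
  have hδβ : δ ≤ β j0.castSucc := min_le_left _ _
  have hδg : cd * δ ≤ g j0 - m := by
    have := min_le_right (β j0.castSucc) ((g j0 - m) / cd)
    calc cd * δ ≤ cd * ((g j0 - m)/cd) := by
          exact mul_le_mul_of_nonneg_left this hcd.le
    _ = g j0 - m := by field_simp
  have hne : j0.succ ≠ j0.castSucc := by
    simp [Fin.ext_iff]
  set β' : Fin (n+2) → ℝ := fun j =>
    β j + (if j = j0.succ then δ else 0) - (if j = j0.castSucc then δ else 0) with hβ'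
  have hβ'nn : ∀ j, 0 ≤ β' j := by
    intro j
    simp only [hβ']
    by_cases h1 : j = j0.succ
    · subst h1; rw [if_pos rfl, if_neg hne]
      have := hβnn j0.succ
      linarith
    · by_cases h2 : j = j0.castSucc
      · simp [h1, h2, hne.symm]
        linarith [hδβ]
      · simp [h1, h2]
        exact hβnn j
  have hβ'sum : ∑ j, β' j = 1 := by
    simp only [hβ']
    rw [Finset.sum_sub_distrib, Finset.sum_add_distrib, hβsum]
    rw [Finset.sum_ite_eq' univ j0.succ (fun _ => δ),
      Finset.sum_ite_eq' univ j0.castSucc (fun _ => δ)]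
    simp
  have hg' : ∀ k, (∑ j, Λ k j * β' j) = g k - (if (k : ℕ) = (j0 : ℕ) then cd * δ else 0) := by
    intro k
    have : ∀ j, Λ k j * β' j = Λ k j * β j + (if j = j0.succ then Λ k j * δ else 0)
        - (if j = j0.castSucc then Λ k j * δ else 0) := by
      intro j; simp only [hβ']; split_ifs <;> ring
    rw [Finset.sum_congr rfl fun j _ => this j, Finset.sum_sub_distrib,
      Finset.sum_add_distrib, Finset.sum_ite_eq' univ j0.succ (fun j => Λ k j * δ),
      Finset.sum_ite_eq' univ j0.castSucc (fun j => Λ k j * δ)]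
    simp only [mem_univ, if_true]
    have hth := hΛd k j0
    have hgk : g k = ∑ j, Λ k j * β j := rfl
    rw [hgk]
    split_ifs with h
    · rw [if_pos h] at hth
      linear_combination (-δ) * hth
    · rw [if_neg h] at hth
      linear_combination (-δ) * hth
  have hinf' : (Finset.univ.inf' Finset.univ_nonempty fun k : Fin (n+1) => ∑ j, Λ k j * β' j) = m := by
    apply le_antisymm
    · calc (Finset.univ.inf' Finset.univ_nonempty fun k : Fin (n+1) => ∑ j, Λ k j * β' j)
          ≤ ∑ j, Λ istar j * β' j := Finset.inf'_le _ (mem_univ istar)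
      _ = m := by
        rw [hg' istar]
        have hms : g istar = m := histar.symm
        have : ¬ ((istar : ℕ) = (j0 : ℕ)) := by
          intro h
          have he : istar = j0 := Fin.ext h
          rw [he] at hms
          exact absurd hms (ne_of_gt hgj0)
        simp [this, hms]
    · apply Finset.le_inf'
      intro k _
      rw [hg' k]
      split_ifs with h
      · have hk : g k = g j0 := by rw [Fin.ext h]
        linarith [hδg]
      · linarith [hmle k]
  have hμ' : ∑ j, μ j * β' j = (∑ j, μ j * β j) - δ * (μ j0.castSucc - μ j0.succ) := by
    have : ∀ j, μ j * β' j = μ j * β j + (if j = j0.succ then μ j * δ else 0)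
        - (if j = j0.castSucc then μ j * δ else 0) := by
      intro j; simp only [hβ']; split_ifs <;> ring
    rw [Finset.sum_congr rfl fun j _ => this j, Finset.sum_sub_distrib,
      Finset.sum_add_distrib, Finset.sum_ite_eq' univ j0.succ (fun j => μ j * δ),
      Finset.sum_ite_eq' univ j0.castSucc (fun j => μ j * δ)]
    simp only [mem_univ, if_true]
    try ring
  have hobj := hopt β' hβ'nn hβ'sum
  have hlpβ' : lpObj n Λ μ β' = m - ∑ j, μ j * β j + δ * (μ j0.castSucc - μ j0.succ) := by
    rw [lpObj, hinf', hμ']; ring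
  have hlpβ : lpObj n Λ μ (fun j => x j / ∑ j', x j') = m - ∑ j, μ j * β j := by
    rfl
  rw [hlpβ', hlpβ] at hobj
  have : 0 < δ * (μ j0.castSucc - μ j0.succ) :=
    mul_pos hδpos (by linarith [hμ j0])
  linarith

lemma sum_comb (N : ℕ) (a v w : Fin N → ℝ) (s : ℝ) :
    ∑ j, a j * (v j + s * w j) = (∑ j, a j * v j) + s * ∑ j, a j * w j := by
  rw [Finset.mul_sum, ← Finset.sum_add_distrib]
  exact Finset.sum_congr rfl fun j _ => by ring

set_option maxHeartbeats 1600000 in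
/-- any extreme point of the polyhedron corresponding to a defender
equilibrium strategy has the form: zeros before an index s, components
x_i = ((r_i − r_{i−1})/c_d)·‖x‖ > 0 for s+1 ≤ i ≤ m, and not both x_s > 0 and
x_{m+1} > 0. -/
theorem optimal_extreme_point_structure
    (n : ℕ) (r : Fin (n+1) → ℝ) (cd ε : ℝ)
    (hr : ∀ i j : Fin (n+1), i < j → r i < r j) (hcd : 0 < cd) (hε : 0 < ε)
    (μ : Fin (n+2) → ℝ) (hμ : ∀ j : Fin (n+1), μ j.succ < μ j.castSucc)
    (Λ : Fin (n+1) → Fin (n+2) → ℝ)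
    (hΛ : ∀ i j, Λ i j =
      cd * (if (j : ℕ) ≤ (i : ℕ) then 1 else 0) - r i + (r (Fin.last n) + ε))
    (x : Fin (n+2) → ℝ) (hx : ExtremePt n Λ x)
    (heq : CorrespondsToEq n Λ μ x) :
    ∃ s : ℕ, ∃ hs : s ≤ n,
      (∀ j : Fin (n+2), (j : ℕ) < s → x j = 0) ∧
      (∀ i : ℕ, ∀ h1 : s < i, ∀ h2 : i ≤ n,
        x ⟨i, by omega⟩ = (r ⟨i, by omega⟩ - r ⟨i - 1, by omega⟩) / cd * ∑ j, x j ∧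
        0 < x ⟨i, by omega⟩) ∧
      ¬ (0 < x ⟨s, by omega⟩ ∧ 0 < x (Fin.last (n+1))) := by
  classical
  obtain ⟨⟨hxnn, hfeas⟩, hnotmid⟩ := hx
  obtain ⟨hS, hopt⟩ := heq
  have hΛd := Λdiff n r cd ε Λ hΛ
  have hRs := rowsplit n r cd ε Λ hΛ
  have hrlast : ∀ i : Fin (n+1), r i ≤ r (Fin.last n) := by
    intro i
    rcases (Fin.le_last i).lt_or_eq with h | h
    · exact (hr _ _ h).le
    · rw [h]
  have hcpos : ∀ i : Fin (n+1), 0 < r (Fin.last n) + ε - r i := by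
    intro i; have := hrlast i; linarith
  -- minimal support index
  have hsupp : (univ.filter (fun j : Fin (n+2) => x j ≠ 0)).Nonempty := by
    by_contra h
    rw [Finset.not_nonempty_iff_eq_empty, Finset.filter_eq_empty_iff] at h
    have : ∑ j, x j = 0 := Finset.sum_eq_zero (fun j hj => by
      have := h hj
      simpa using this)
    linarith
  set t : Fin (n+2) := (univ.filter (fun j : Fin (n+2) => x j ≠ 0)).min' hsupp with htdef
  have hxt : 0 < x t := by
    have := Finset.min'_mem _ hsupp
    rw [Finset.mem_filter] at this
    exact (hxnn t).lt_of_ne' this.2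
  have hzero : ∀ j : Fin (n+2), (j : ℕ) < (t : ℕ) → x j = 0 := by
    intro j hj
    by_contra h
    have : t ≤ j := Finset.min'_le _ _ (Finset.mem_filter.mpr ⟨mem_univ j, h⟩)
    rw [Fin.le_def] at this
    omega
  -- difference of consecutive row values
  have hdiff : ∀ k : ℕ, ∀ hk : k + 1 < n + 1,
      (∑ j, Λ ⟨k+1, hk⟩ j * x j) =
        (∑ j, Λ ⟨k, by omega⟩ j * x j)
          + (cd * x ⟨k+1, by omega⟩
            - (r ⟨k+1, hk⟩ - r ⟨k, by omega⟩) * (∑ j, x j)) := by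
    intro k hk
    rw [hRs, hRs]
    have hps := psum_succ n x k (by omega)
    simp only [Fin.val_mk] at hps ⊢
    rw [hps]
    ring
  by_cases htn : (t : ℕ) ≤ n
  case neg =>
    -- support is only the last coordinate
    refine ⟨n, le_refl n, ?_, ?_, ?_⟩
    · intro j hj; exact hzero j (by omega)
    · intro i h1 h2; exact absurd h2 (by omega)
    · rintro ⟨h1, -⟩
      have : x ⟨n, by omega⟩ = 0 := hzero _ (by show n < (t:ℕ); omega)
      rw [this] at h1; exact lt_irrefl _ h1
  case pos =>
  have hminA : ∀ (j0 : Fin (n+1)), 0 < x j0.castSucc →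
      ∀ i, ∑ j, Λ j0 j * x j ≤ ∑ j, Λ i j * x j :=
    claimA n cd hcd μ hμ Λ hΛd x hxnn hS hopt
  -- chain of positivity and minimality
  have hchain : ∀ k : ℕ, (t:ℕ) ≤ k → ∀ hk : k < n + 1,
      0 < x ⟨k, by omega⟩ ∧ ∀ i, ∑ j, Λ ⟨k, hk⟩ j * x j ≤ ∑ j, Λ i j * x j := by
    intro k hk1
    induction k, hk1 using Nat.le_induction with
    | base =>
      intro hk
      constructor
      · exact hxt
      · intro i
        exact hminA ⟨(t:ℕ), hk⟩ hxt i
    | succ k hk ih =>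
      intro hk2
      obtain ⟨hxk, hmk⟩ := ih (by omega)
      have hd := hdiff k (by omega)
      have hle := hmk ⟨k+1, by omega⟩
      have hrr : r ⟨k, by omega⟩ < r ⟨k+1, by omega⟩ :=
        hr _ _ (by simp [Fin.lt_def])
      have h0 : 0 < (r ⟨k+1, by omega⟩ - r ⟨k, by omega⟩) * ∑ j, x j :=
        mul_pos (by linarith) hS
      have hx1 : 0 < x ⟨k+1, by omega⟩ := by nlinarith [hd, hle, hcd]
      exact ⟨hx1, fun i => hminA ⟨k+1, by omega⟩ hx1 i⟩
  -- the formula for indices above t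
  have hform : ∀ i : ℕ, ∀ _h1 : (t:ℕ) < i, ∀ _h2 : i ≤ n,
      x ⟨i, by omega⟩ = (r ⟨i, by omega⟩ - r ⟨i-1, by omega⟩) / cd * ∑ j, x j ∧
      0 < x ⟨i, by omega⟩ := by
    intro i hi1 hi2
    obtain ⟨u, rfl⟩ : ∃ u, i = u + 1 := ⟨i-1, by omega⟩
    obtain ⟨hxi, hmi⟩ := hchain (u+1) (by omega) (by omega)
    obtain ⟨hxu, hmu⟩ := hchain u (by omega) (by omega)
    have hd := hdiff u (by omega)
    have ha := hmi ⟨u, by omega⟩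
    have hb := hmu ⟨u+1, by omega⟩
    have hxeq : cd * x ⟨u+1, by omega⟩
        = (r ⟨u+1, by omega⟩ - r ⟨u, by omega⟩) * ∑ j, x j := by
      linarith [hd, ha, hb]
    refine ⟨?_, hxi⟩
    simp only [Nat.add_sub_cancel]
    rw [div_mul_eq_mul_div]
    exact (eq_div_iff hcd.ne').mpr (by linarith [hxeq])
  by_cases hlast : x (Fin.last (n+1)) = 0
  · -- last coordinate zero : take s = t
    refine ⟨(t:ℕ), htn, ?_, hform, ?_⟩
    · intro j hj; exact hzero j hj
    · rintro ⟨-, h2⟩; rw [hlast] at h2; exact lt_irrefl _ h2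
  · -- last coordinate positive : use extremality
    have hlastpos : 0 < x (Fin.last (n+1)) := (hxnn _).lt_of_ne' hlast
    have hRlow : ∀ i : Fin (n+1), (i:ℕ) < (t:ℕ) →
        (∑ j, Λ i j * x j) = (r (Fin.last n) + ε - r i) * ∑ j, x j := by
      intro i hi
      rw [hRs]
      rw [psum_low n x (i:ℕ) (fun j hj => hzero j (by omega))]
      ring
    have hxpos_ge : ∀ j : Fin (n+2), (t:ℕ) ≤ (j:ℕ) → 0 < x j := by
      intro j hj
      rcases Nat.lt_or_ge n (j:ℕ) with h | h
      · have : j = Fin.last (n+1) := Fin.ext (by simp [Fin.val_last]; omega)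
        rw [this]; exact hlastpos
      · exact (hchain (j:ℕ) hj (by omega)).1
    -- key claim: t ≥ 1 and row t-1 is tight
    have hkey : ∃ u : ℕ, ∃ hu : u + 1 = (t:ℕ),
        (∑ j, Λ ⟨u, by omega⟩ j * x j) = 1 := by
      by_contra hcon
      push_neg at hcon
      have hslack : ∀ i : Fin (n+1), (i:ℕ) < (t:ℕ) → 1 < ∑ j, Λ i j * x j := by
        intro i hi
        rcases Nat.lt_or_ge (i:ℕ) ((t:ℕ)-1) with h | h
        · have hf := hfeas ⟨(t:ℕ)-1, by omega⟩
          rw [hRlow ⟨(t:ℕ)-1, by omega⟩ (by show (t:ℕ)-1 < (t:ℕ); omega)] at hf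
          rw [hRlow i hi]
          have hlt : r i < r ⟨(t:ℕ)-1, by omega⟩ :=
            hr _ _ (by simp [Fin.lt_def]; omega)
          nlinarith [hS]
        · have hieq : (i:ℕ) = (t:ℕ)-1 := by omega
          rcases (hfeas i).lt_or_eq with h2 | h2
          · exact h2
          · exfalso
            have hii : i = ⟨(t:ℕ)-1, by omega⟩ := Fin.ext hieq
            exact hcon ((t:ℕ)-1) (by omega) (by rw [← hii]; exact h2.symm)
      -- construct the direction d
      set C := r (Fin.last n) + ε with hC
      set d : Fin (n+2) → ℝ := fun j =>
        if (j:ℕ) < (t:ℕ) then 0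
        else if hj : (j:ℕ) ≤ n then
          (if (j:ℕ) = (t:ℕ) then -(C - r ⟨(t:ℕ), by omega⟩)/cd
           else (r ⟨(j:ℕ), by omega⟩ - r ⟨(j:ℕ)-1, by omega⟩)/cd)
        else 1 + ε/cd with hddef
      have hd_low : ∀ j : Fin (n+2), (j:ℕ) < (t:ℕ) → d j = 0 := by
        intro j hj; simp only [hddef]; rw [if_pos hj]
      have hd_t : ∀ j : Fin (n+2), (j:ℕ) = (t:ℕ) →
          d j = -(C - r ⟨(t:ℕ), by omega⟩)/cd := by
        intro j hj; simp only [hddef]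
        rw [if_neg (by omega), dif_pos (by omega), if_pos hj]
      have hd_mid : ∀ j : Fin (n+2), ∀ _h1 : (t:ℕ) < (j:ℕ), ∀ _h2 : (j:ℕ) ≤ n,
          d j = (r ⟨(j:ℕ), by omega⟩ - r ⟨(j:ℕ)-1, by omega⟩)/cd := by
        intro j hj1 hj2; simp only [hddef]
        rw [if_neg (by omega), dif_pos hj2, if_neg (by omega)]
      have hd_last : ∀ j : Fin (n+2), (j:ℕ) = n+1 → d j = 1 + ε/cd := by
        intro j hj; simp only [hddef]
        rw [if_neg (by omega), dif_neg (by omega)]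
      -- partial sums of d
      have hPd : ∀ k : ℕ, (t:ℕ) ≤ k → ∀ hk : k ≤ n,
          (∑ j : Fin (n+2), if (j:ℕ) ≤ k then d j else 0)
            = -(C - r ⟨k, by omega⟩)/cd := by
        intro k hk1
        induction k, hk1 using Nat.le_induction with
        | base =>
          intro hk
          rcases Nat.eq_zero_or_pos (t:ℕ) with h0 | h0
          · simp only [h0]
            rw [psum_zero n d]
            rw [hd_t 0 (by simp [h0]),
              show (⟨(t:ℕ), by omega⟩ : Fin (n+1)) = ⟨0, by omega⟩ from
                Fin.ext (by simpa using h0)]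
            try norm_num
          · obtain ⟨u, hu⟩ : ∃ u, (t:ℕ) = u + 1 := ⟨(t:ℕ)-1, by omega⟩
            simp only [hu]
            rw [psum_succ n d u (by omega)]
            rw [psum_low n d u (fun j hj => hd_low j (by omega))]
            rw [hd_t ⟨u+1, by omega⟩ (by simp [Fin.val_mk]; omega),
              show (⟨(t:ℕ), by omega⟩ : Fin (n+1)) = ⟨u+1, by omega⟩ from
                Fin.ext (by simp [hu])]
            try ring
        | succ k hk ih =>
          intro hk2
          rw [psum_succ n d k (by omega), ih (by omega),
            hd_mid ⟨k+1, by omega⟩ (by simp [Fin.val_mk]; omega) (by simp [Fin.val_mk]; omega)]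
          simp only [Fin.val_mk, Nat.add_sub_cancel]
          ring
      -- total sum of d
      have hTd : ∑ j, d j = 1 := by
        rw [← psum_last n d, psum_succ n d n (by omega), hPd n htn le_rfl,
          hd_last ⟨n+1, by omega⟩ (by simp [Fin.val_mk])]
        have hln : (⟨n, by omega⟩ : Fin (n+1)) = Fin.last n := rfl
        rw [hln, hC]
        ring
      -- row sums against d
      have hLd_hi : ∀ i : Fin (n+1), (t:ℕ) ≤ (i:ℕ) → (∑ j, Λ i j * d j) = 0 := by
        intro i hi
        rw [hRs i d, hPd (i:ℕ) hi (by omega), hTd]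
        have : (⟨(i:ℕ), by omega⟩ : Fin (n+1)) = i := rfl
        rw [this]
        have hcd' : cd ≠ 0 := hcd.ne'
        field_simp
        ring
      have hLd_lo : ∀ i : Fin (n+1), (i:ℕ) < (t:ℕ) →
          (∑ j, Λ i j * d j) = C - r i := by
        intro i hi
        rw [hRs i d, psum_low n d (i:ℕ) (fun j hj => hd_low j (by omega)), hTd]
        ring
      -- choose the perturbation size
      obtain ⟨η, hηpos, hηbd1, hηbd2⟩ : ∃ η : ℝ, 0 < η ∧
          (∀ i : Fin (n+1), (i:ℕ) < (t:ℕ) → η * (C - r i) ≤ (∑ j, Λ i j * x j) - 1) ∧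
          (∀ j : Fin (n+2), (t:ℕ) ≤ (j:ℕ) → η * (|d j| + 1) ≤ x j) := by
        refine ⟨min (univ.inf' univ_nonempty fun i : Fin (n+1) =>
            if (i:ℕ) < (t:ℕ) then ((∑ j, Λ i j * x j) - 1)/(C - r i) else 1)
          (univ.inf' univ_nonempty fun j : Fin (n+2) =>
            if (t:ℕ) ≤ (j:ℕ) then x j / (|d j| + 1) else 1), ?_, ?_, ?_⟩
        · apply lt_min
          · rw [Finset.lt_inf'_iff]
            intro i _
            split_ifs with h
            · exact div_pos (by linarith [hslack i h]) (hcpos i)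
            · norm_num
          · rw [Finset.lt_inf'_iff]
            intro j _
            split_ifs with h
            · exact div_pos (hxpos_ge j h) (by positivity)
            · norm_num
        · intro i hi
          have h1 := Finset.inf'_le (fun i : Fin (n+1) =>
            if (i:ℕ) < (t:ℕ) then ((∑ j, Λ i j * x j) - 1)/(C - r i) else 1) (mem_univ i)
          rw [if_pos hi] at h1
          have h2 : (0:ℝ) < C - r i := hcpos i
          have h4 : min (univ.inf' univ_nonempty fun i : Fin (n+1) =>
              if (i:ℕ) < (t:ℕ) then ((∑ j, Λ i j * x j) - 1)/(C - r i) else 1)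
            (univ.inf' univ_nonempty fun j : Fin (n+2) =>
              if (t:ℕ) ≤ (j:ℕ) then x j / (|d j| + 1) else 1)
              ≤ ((∑ j, Λ i j * x j) - 1)/(C - r i) :=
            le_trans (min_le_left _ _) h1
          calc _ ≤ (((∑ j, Λ i j * x j) - 1)/(C - r i)) * (C - r i) := by
                exact mul_le_mul_of_nonneg_right h4 h2.le
          _ = (∑ j, Λ i j * x j) - 1 := by field_simp
        · intro j hj
          have h1 := Finset.inf'_le (fun j : Fin (n+2) =>
            if (t:ℕ) ≤ (j:ℕ) then x j / (|d j| + 1) else 1) (mem_univ j)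
          rw [if_pos hj] at h1
          have h2 : (0:ℝ) < |d j| + 1 := by positivity
          have h4 : min (univ.inf' univ_nonempty fun i : Fin (n+1) =>
              if (i:ℕ) < (t:ℕ) then ((∑ j, Λ i j * x j) - 1)/(C - r i) else 1)
            (univ.inf' univ_nonempty fun j : Fin (n+2) =>
              if (t:ℕ) ≤ (j:ℕ) then x j / (|d j| + 1) else 1)
              ≤ x j / (|d j| + 1) :=
            le_trans (min_le_right _ _) h1
          calc _ ≤ (x j / (|d j| + 1)) * (|d j| + 1) := by
                exact mul_le_mul_of_nonneg_right h4 h2.le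
          _ = x j := by field_simp
      -- build the two points
      apply hnotmid
      refine ⟨fun j => x j + (-η) * d j, fun j => x j + η * d j, ⟨?_, ?_⟩, ⟨?_, ?_⟩, ?_, ?_⟩
      · intro j
        show 0 ≤ x j + (-η) * d j
        rcases Nat.lt_or_ge (j:ℕ) (t:ℕ) with h | h
        · rw [hd_low j h]; have := hxnn j; linarith
        · have hb := hηbd2 j h
          have h1 : η * d j ≤ η * |d j| :=
            mul_le_mul_of_nonneg_left (le_abs_self _) hηpos.le
          have h3 : η * (|d j| + 1) = η * |d j| + η := by ring
          linarith
      · intro i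
        show 1 ≤ ∑ j, Λ i j * (x j + (-η) * d j)
        rw [sum_comb (n+2) (Λ i) x d (-η)]
        rcases Nat.lt_or_ge (i:ℕ) (t:ℕ) with h | h
        · rw [hLd_lo i h]
          have := hηbd1 i h
          linarith
        · rw [hLd_hi i h]
          have := hfeas i
          linarith
      · intro j
        show 0 ≤ x j + η * d j
        rcases Nat.lt_or_ge (j:ℕ) (t:ℕ) with h | h
        · rw [hd_low j h]; have := hxnn j; linarith
        · have hb := hηbd2 j h
          have h1 : -(η * |d j|) ≤ η * d j := by
            have := mul_le_mul_of_nonneg_left (neg_abs_le (d j)) hηpos.le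
            linarith [this]
          have h3 : η * (|d j| + 1) = η * |d j| + η := by ring
          linarith
      · intro i
        show 1 ≤ ∑ j, Λ i j * (x j + η * d j)
        rw [sum_comb (n+2) (Λ i) x d η]
        rcases Nat.lt_or_ge (i:ℕ) (t:ℕ) with h | h
        · rw [hLd_lo i h]
          have h2 : (0:ℝ) < C - r i := hcpos i
          have := hfeas i
          nlinarith
        · rw [hLd_hi i h]
          have := hfeas i
          linarith
      · intro hyz
        have := congrFun hyz (Fin.last (n+1))
        rw [hd_last (Fin.last (n+1)) (by simp [Fin.val_last])] at this
        have hpos : (0:ℝ) < 1 + ε/cd := by positivity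
        nlinarith [this]
      · funext j
        show x j = ((x j + (-η) * d j) + (x j + η * d j)) / 2
        ring
    -- use the key claim to conclude
    obtain ⟨u, hu, hRu⟩ := hkey
    obtain ⟨hxt1, hmt1⟩ := hchain (u+1) (by omega) (by omega)
    have hRt : (∑ j, Λ ⟨u+1, by omega⟩ j * x j) = 1 :=
      le_antisymm (le_trans (hmt1 ⟨u, by omega⟩) (le_of_eq hRu)) (hfeas _)
    have hd := hdiff u (by omega)
    have hxteq : cd * x ⟨u+1, by omega⟩
        = (r ⟨u+1, by omega⟩ - r ⟨u, by omega⟩) * ∑ j, x j := by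
      linarith [hd, hRt, hRu]
    refine ⟨u, by omega, ?_, ?_, ?_⟩
    · intro j hj; exact hzero j (by omega)
    · intro i h1 h2
      rcases Nat.lt_or_ge (u+1) i with h | h
      · exact hform i (by omega) h2
      · have hieq : i = u + 1 := by omega
        subst hieq
        constructor
        · simp only [Nat.add_sub_cancel]
          rw [div_mul_eq_mul_div]
          exact (eq_div_iff hcd.ne').mpr (by linarith [hxteq])
        · exact hxt1
    · rintro ⟨h1, -⟩
      have : x ⟨u, by omega⟩ = 0 := hzero _ (by show u < (t:ℕ); omega)
      rw [this] at h1; exact lt_irrefl _ h1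
end

section
/- In the reduced classification game, at most one extreme point of 'Type I' (with x_{m+1} = 0 and x_s > 0) of the defender's LP polyhedron corresponds to a Nash equilibrium strategy: if two Type I extreme points with distinct starting indices s_a < s_b both correspond to equilibrium strategies, the strict monotonicity of μ yields a contradiction. -/
open Finset

/-- A 'Type I' point of the polyhedron with starting index s: x_{m+1} = 0,
x_s > 0, zeros before s, x_i = ((r_i − r_{i−1})/c_d)·‖x‖ for i > s, and all
inequality constraints from row s through row m tight. -/
def TypeIPt (n : ℕ) (Λ : Fin (n+1) → Fin (n+2) → ℝ) (r : Fin (n+1) → ℝ)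
    (cd : ℝ) (x : Fin (n+2) → ℝ) (s : Fin (n+1)) : Prop :=
  x (Fin.last (n+1)) = 0 ∧
  0 < x s.castSucc ∧
  (∀ j : Fin (n+2), (j : ℕ) < (s : ℕ) → x j = 0) ∧
  (∀ i : ℕ, ∀ h1 : (s : ℕ) < i, ∀ h2 : i ≤ n,
    x ⟨i, by omega⟩ = (r ⟨i, by omega⟩ - r ⟨i - 1, by omega⟩) / cd * ∑ j, x j ∧
    0 < x ⟨i, by omega⟩) ∧
  (∀ i : Fin (n+1), (s : ℕ) ≤ (i : ℕ) → ∑ j, Λ i j * x j = 1)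

/-- at most one Type I extreme point corresponds to an equilibrium
strategy: two Type I points with distinct starting indices s_a < s_b cannot both
correspond to defender Nash equilibrium strategies. -/
theorem at_most_one_typeI_optimal
    (n : ℕ) (r : Fin (n+1) → ℝ) (cd ε : ℝ)
    (hr : ∀ i j : Fin (n+1), i < j → r i < r j) (hcd : 0 < cd) (hε : 0 < ε)
    (μ : Fin (n+2) → ℝ) (hμ : ∀ j : Fin (n+1), μ j.succ < μ j.castSucc)
    (Λ : Fin (n+1) → Fin (n+2) → ℝ)
    (hΛ : ∀ i j, Λ i j =
      cd * (if (j : ℕ) ≤ (i : ℕ) then 1 else 0) - r i + (r (Fin.last n) + ε))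
    (x y : Fin (n+2) → ℝ) (hx : InPoly n Λ x) (hy : InPoly n Λ y)
    (sa sb : Fin (n+1)) (hab : sa < sb)
    (hxI : TypeIPt n Λ r cd x sa) (hyI : TypeIPt n Λ r cd y sb)
    (hxeq : CorrespondsToEq n Λ μ x) (hyeq : CorrespondsToEq n Λ μ y) :
    False := by
  classical
  have hcdε : 0 < cd + ε := by positivity
  -- row `Fin.last n` sum for any vector vanishing at the last coordinate
  have hrow : ∀ z : Fin (n+2) → ℝ, z (Fin.last (n+1)) = 0 →
      ∑ j, Λ (Fin.last n) j * z j = (cd + ε) * ∑ j, z j := by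
    intro z hz
    rw [Finset.mul_sum]
    refine Finset.sum_congr rfl fun j _ => ?_
    rw [hΛ]
    by_cases h : (j : ℕ) ≤ ((Fin.last n : Fin (n+1)) : ℕ)
    · simp only [h, if_true]; ring
    · have hj : j = Fin.last (n+1) := by
        apply Fin.ext
        simp only [Fin.val_last] at h ⊢
        omega
      rw [hj, hz]; ring
  have hsan : (sa : ℕ) ≤ ((Fin.last n : Fin (n+1)) : ℕ) := by
    simp [Fin.val_last]; omega
  have hsbn : (sb : ℕ) ≤ ((Fin.last n : Fin (n+1)) : ℕ) := by
    simp [Fin.val_last]; omega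
  have hSx : ∑ j, x j = (cd + ε)⁻¹ := by
    have h1 : ∑ j, Λ (Fin.last n) j * x j = 1 := hxI.2.2.2.2 (Fin.last n) hsan
    rw [hrow x hxI.1] at h1
    field_simp
    linarith
  have hSy : ∑ j, y j = (cd + ε)⁻¹ := by
    have h1 : ∑ j, Λ (Fin.last n) j * y j = 1 := hyI.2.2.2.2 (Fin.last n) hsbn
    rw [hrow y hyI.1] at h1
    field_simp
    linarith
  -- the lpObj value of the normalized vectors
  have hval : ∀ z : Fin (n+2) → ℝ, InPoly n Λ z → z (Fin.last (n+1)) = 0 →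
      (∑ j, z j = (cd + ε)⁻¹) →
      lpObj n Λ μ (fun j => z j / ∑ j', z j') =
        (cd + ε) - (cd + ε) * ∑ j, μ j * z j := by
    intro z hz hzl hzS
    have hβ : (fun j => z j / ∑ j', z j') = fun j => (cd + ε) * z j := by
      funext j
      rw [hzS, div_eq_mul_inv, inv_inv, mul_comm]
    rw [hβ]
    unfold lpObj
    have hsum : ∀ i : Fin (n+1),
        (∑ j, Λ i j * ((cd + ε) * z j)) = (cd + ε) * ∑ j, Λ i j * z j := by
      intro i
      rw [Finset.mul_sum]
      exact Finset.sum_congr rfl fun j _ => by ring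
    have hinf : (Finset.univ.inf' Finset.univ_nonempty
        fun i : Fin (n+1) => ∑ j, Λ i j * ((cd + ε) * z j)) = cd + ε := by
      apply le_antisymm
      · calc (Finset.univ.inf' Finset.univ_nonempty
            fun i : Fin (n+1) => ∑ j, Λ i j * ((cd + ε) * z j))
            ≤ ∑ j, Λ (Fin.last n) j * ((cd + ε) * z j) :=
              Finset.inf'_le _ (Finset.mem_univ _)
          _ = cd + ε := by
              rw [hsum, hrow z hzl, hzS, mul_inv_cancel₀ (ne_of_gt hcdε), mul_one]
      · apply Finset.le_inf'
        intro i _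
        rw [hsum]
        nlinarith [hz.2 i]
    rw [hinf]
    have : ∑ j, μ j * ((cd + ε) * z j) = (cd + ε) * ∑ j, μ j * z j := by
      rw [Finset.mul_sum]
      exact Finset.sum_congr rfl fun j _ => by ring
    rw [this]
  have hvx := hval x hx hxI.1 hSx
  have hvy := hval y hy hyI.1 hSy
  -- normalized vectors lie in the simplex
  have hsimp : ∀ z : Fin (n+2) → ℝ, InPoly n Λ z → (∑ j, z j = (cd + ε)⁻¹) →
      (∀ j, 0 ≤ z j / ∑ j', z j') ∧ (∑ j, z j / ∑ j', z j' = 1) := by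
    intro z hz hzS
    have hpos : 0 < ∑ j', z j' := by rw [hzS]; positivity
    constructor
    · intro j; exact div_nonneg (hz.1 j) (le_of_lt hpos)
    · rw [← Finset.sum_div, div_self (ne_of_gt hpos)]
  obtain ⟨hbx0, hbx1⟩ := hsimp x hx hSx
  obtain ⟨hby0, hby1⟩ := hsimp y hy hSy
  have h1 := hxeq.2 _ hby0 hby1
  have h2 := hyeq.2 _ hbx0 hbx1
  rw [hvx, hvy] at h1 h2
  have hμeq : ∑ j, μ j * x j = ∑ j, μ j * y j := by
    have h3 : (cd + ε) * (∑ j, μ j * x j) = (cd + ε) * ∑ j, μ j * y j := by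
      linarith
    exact mul_left_cancel₀ (ne_of_gt hcdε) h3
  -- strict antitonicity of μ
  have hμSA : StrictAnti μ := Fin.strictAnti_iff_succ_lt.mpr hμ
  -- the comparison function
  have hxy_eq : ∀ j : Fin (n+2), (sb : ℕ) < (j : ℕ) → x j = y j := by
    intro j hj
    by_cases hjn : (j : ℕ) ≤ n
    · have hxa := (hxI.2.2.2.1 (j : ℕ) (by omega) hjn).1
      have hya := (hyI.2.2.2.1 (j : ℕ) hj hjn).1
      have hjj : (⟨(j : ℕ), by omega⟩ : Fin (n+2)) = j := by apply Fin.ext; rfl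
      rw [hjj] at hxa hya
      rw [hxa, hya, hSx, hSy]
    · have hj' : j = Fin.last (n+1) := by
        apply Fin.ext; simp only [Fin.val_last]; omega
      rw [hj', hxI.1, hyI.1]
  have hg_nonneg : ∀ j : Fin (n+2), 0 ≤ (μ j - μ sb.castSucc) * (x j - y j) := by
    intro j
    rcases lt_trichotomy ((j : ℕ)) ((sb : ℕ)) with h | h | h
    · have hyj : y j = 0 := hyI.2.2.1 j h
      have hμj : μ sb.castSucc < μ j := by
        apply hμSA
        rwa [Fin.lt_def]
      have := hx.1 j
      rw [hyj]
      nlinarith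
    · have hjj : j = sb.castSucc := by apply Fin.ext; exact h
      rw [hjj]
      simp
    · rw [hxy_eq j h]
      simp
  have hg_pos : 0 < (μ sa.castSucc - μ sb.castSucc) * (x sa.castSucc - y sa.castSucc) := by
    have hya : y sa.castSucc = 0 := by
      apply hyI.2.2.1
      simp only [Fin.coe_castSucc]
      exact hab
    have hμa : μ sb.castSucc < μ sa.castSucc := by
      exact hμSA (Fin.castSucc_lt_castSucc_iff.mpr hab)
    rw [hya]
    nlinarith [hxI.2.1]
  have hsum_pos : 0 < ∑ j, (μ j - μ sb.castSucc) * (x j - y j) :=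
    Finset.sum_pos' (fun j _ => hg_nonneg j) ⟨sa.castSucc, Finset.mem_univ _, hg_pos⟩
  have hsum_zero : ∑ j, (μ j - μ sb.castSucc) * (x j - y j) = 0 := by
    have hdecomp : ∑ j, (μ j - μ sb.castSucc) * (x j - y j)
        = (∑ j, μ j * x j) - (∑ j, μ j * y j)
          - μ sb.castSucc * (∑ j, x j) + μ sb.castSucc * (∑ j, y j) := by
      rw [Finset.mul_sum, Finset.mul_sum, ← Finset.sum_sub_distrib,
        ← Finset.sum_sub_distrib, ← Finset.sum_add_distrib]
      exact Finset.sum_congr rfl fun j _ => by ring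
    rw [hdecomp, hμeq, hSx, hSy]
    ring
  rw [hsum_zero] at hsum_pos
  exact lt_irrefl 0 hsum_pos
end

section
/- In the reduced classification game, if the defender's unique equilibrium strategy β has β_k > 0, β_{k+1} > 0 for two consecutive reward indices k, k+1 (so both threshold classifiers c_k and c_{k+1} are in the support), then in equilibrium the attacker places weight α_k = (μ_k − μ_{k+1})/c_d on reward r_k. -/
open Finset

/-- Reduced game, attacker's expected payoff: the attacker picks reward index
i ∈ {0,…,n}, the defender a threshold index j ∈ {0,…,n+1}; threshold j detects
reward i iff i ≥ j (threshold n+1 never detects). -/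
noncomputable def UAred (n : ℕ) (r : Fin (n+1) → ℝ) (cd : ℝ)
    (α : Fin (n+1) → ℝ) (β : Fin (n+2) → ℝ) : ℝ :=
  ∑ i : Fin (n+1), ∑ j : Fin (n+2), α i * (r i - cd * (if (j : ℕ) ≤ (i : ℕ) then 1 else 0)) * β j

/-- Reduced game, defender's expected payoff: minus attacker payoff minus the
false alarm penalty μ_j of threshold j. -/
noncomputable def UDred (n : ℕ) (r : Fin (n+1) → ℝ) (cd : ℝ) (μ : Fin (n+2) → ℝ)
    (α : Fin (n+1) → ℝ) (β : Fin (n+2) → ℝ) : ℝ :=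
  ∑ i : Fin (n+1), ∑ j : Fin (n+2), α i * (-(r i - cd * (if (j : ℕ) ≤ (i : ℕ) then 1 else 0)) - μ j) * β j

/-- Nash equilibrium of the reduced classification game. -/
def IsNashRed (n : ℕ) (r : Fin (n+1) → ℝ) (cd : ℝ) (μ : Fin (n+2) → ℝ)
    (α : Fin (n+1) → ℝ) (β : Fin (n+2) → ℝ) : Prop :=
  IsProb α ∧ IsProb β ∧
  (∀ α', IsProb α' → UAred n r cd α' β ≤ UAred n r cd α β) ∧
  (∀ β', IsProb β' → UDred n r cd μ α β' ≤ UDred n r cd μ α β)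

/-- Detection probability of reward index i under defender strategy β:
π_d(i) = Σ_{j ≤ i} β_j. -/
noncomputable def pidRed (n : ℕ) (β : Fin (n+2) → ℝ) (i : Fin (n+1)) : ℝ :=
  ∑ j ∈ Finset.univ.filter (fun j : Fin (n+2) => (j : ℕ) ≤ (i : ℕ)), β j

set_option maxHeartbeats 1000000 in
/-- if the defender's equilibrium strategy puts positive weight on
two consecutive threshold classifiers c_k and c_{k+1}, then the attacker places
weight α_k = (μ_k − μ_{k+1})/c_d on reward r_k. -/
theorem attacker_weight_from_consecutive_thresholds
    (n : ℕ) (r : Fin (n+1) → ℝ) (cd cfa p : ℝ) (PN : Fin (n+1) → ℝ)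
    (hr : ∀ i j : Fin (n+1), i < j → r i < r j)
    (hcd : 0 < cd) (hcfa : 0 < cfa) (hp : 0 < p) (hp1 : p < 1)
    (hPN : ∀ i, 0 < PN i) (hPN1 : ∑ i, PN i = 1)
    (μ : Fin (n+2) → ℝ)
    (hμ : ∀ j : Fin (n+2), μ j = (1 - p) / p * cfa *
      ∑ ℓ ∈ Finset.univ.filter (fun ℓ : Fin (n+1) => (j : ℕ) ≤ (ℓ : ℕ)), PN ℓ)
    (α : Fin (n+1) → ℝ) (β : Fin (n+2) → ℝ)
    (hne : IsNashRed n r cd μ α β)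
    (k : Fin (n+1)) (hk1 : 0 < β k.castSucc) (hk2 : 0 < β k.succ) :
    α k = (μ k.castSucc - μ k.succ) / cd := by
  obtain ⟨hα, hβ, hαopt, hβopt⟩ := hne
  set g : Fin (n+2) → ℝ := fun j =>
    ∑ i : Fin (n+1), α i * (-(r i - cd * (if (j : ℕ) ≤ (i : ℕ) then 1 else 0)) - μ j) with hg
  have hUD : ∀ β' : Fin (n+2) → ℝ, UDred n r cd μ α β' = ∑ j, g j * β' j := by
    intro β'
    rw [UDred, Finset.sum_comm]
    exact Finset.sum_congr rfl fun j _ => (Finset.sum_mul _ _ _).symm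
  have key : ∀ a b : Fin (n+2), a ≠ b → 0 < β a → g b ≤ g a := by
    intro a b hab ha
    by_contra h
    push_neg at h
    set β' : Fin (n+2) → ℝ := fun j =>
      β j + (if j = b then β a else 0) - (if j = a then β a else 0) with hβ'
    have hprob : IsProb β' := by
      constructor
      · intro x
        have hx := hβ.1 x
        have hb := hβ.1 b
        simp only [hβ']
        rcases eq_or_ne x a with rfl | hxa
        · rw [if_neg hab, if_pos rfl]
          linarith
        · rw [if_neg hxa]
          rcases eq_or_ne x b with rfl | hxb
          · rw [if_pos rfl]
            linarith
          · rw [if_neg hxb]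
            linarith
      · simp only [hβ']
        rw [Finset.sum_sub_distrib, Finset.sum_add_distrib,
          Finset.sum_ite_eq' Finset.univ b (fun _ => β a),
          Finset.sum_ite_eq' Finset.univ a (fun _ => β a)]
        simp [hβ.2]
    have hle := hβopt β' hprob
    rw [hUD, hUD] at hle
    have hsum : ∑ j, g j * β' j = (∑ j, g j * β j) + g b * β a - g a * β a := by
      simp only [hβ', mul_add, mul_sub, mul_ite, mul_zero]
      rw [Finset.sum_sub_distrib, Finset.sum_add_distrib,
        Finset.sum_ite_eq' Finset.univ b (fun j => g j * β a),
        Finset.sum_ite_eq' Finset.univ a (fun j => g j * β a)]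
      simp
    rw [hsum] at hle
    nlinarith
  have habne : k.castSucc ≠ k.succ := by
    intro hcon
    have := congrArg Fin.val hcon
    simp [Fin.val_succ, Fin.coe_castSucc] at this
  have h1 := key k.castSucc k.succ habne hk1
  have h2 := key k.succ k.castSucc habne.symm hk2
  have heq : g k.castSucc = g k.succ := le_antisymm h2 h1
  have hχ : ∀ i : Fin (n+1),
      (if ((k.castSucc : Fin (n+2)) : ℕ) ≤ (i : ℕ) then (1:ℝ) else 0)
        - (if ((k.succ : Fin (n+2)) : ℕ) ≤ (i : ℕ) then (1:ℝ) else 0)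
      = if i = k then 1 else 0 := by
    intro i
    simp only [Fin.coe_castSucc, Fin.val_succ]
    split_ifs with h1 h2 h3 <;> simp_all [Fin.ext_iff] <;> omega
  have hdiff : g k.castSucc - g k.succ = cd * α k - (μ k.castSucc - μ k.succ) := by
    have hsub : g k.castSucc - g k.succ
        = ∑ i : Fin (n+1), (cd * (α i *
            ((if ((k.castSucc : Fin (n+2)) : ℕ) ≤ (i : ℕ) then (1:ℝ) else 0)
              - (if ((k.succ : Fin (n+2)) : ℕ) ≤ (i : ℕ) then (1:ℝ) else 0)))
          - α i * (μ k.castSucc - μ k.succ)) := by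
      rw [hg]
      rw [← Finset.sum_sub_distrib]
      exact Finset.sum_congr rfl fun i _ => by ring
    rw [hsub, Finset.sum_sub_distrib]
    have hA : ∑ i : Fin (n+1), cd * (α i *
        ((if ((k.castSucc : Fin (n+2)) : ℕ) ≤ (i : ℕ) then (1:ℝ) else 0)
          - (if ((k.succ : Fin (n+2)) : ℕ) ≤ (i : ℕ) then (1:ℝ) else 0))) = cd * α k := by
      have : ∀ i : Fin (n+1), cd * (α i *
          ((if ((k.castSucc : Fin (n+2)) : ℕ) ≤ (i : ℕ) then (1:ℝ) else 0)
            - (if ((k.succ : Fin (n+2)) : ℕ) ≤ (i : ℕ) then (1:ℝ) else 0)))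
          = if i = k then cd * α i else 0 := by
        intro i
        rw [hχ i]
        split_ifs <;> ring
      rw [Finset.sum_congr rfl fun i _ => this i,
        Finset.sum_ite_eq' Finset.univ k (fun i => cd * α i)]
      simp
    have hB : ∑ i : Fin (n+1), α i * (μ k.castSucc - μ k.succ)
        = μ k.castSucc - μ k.succ := by
      rw [← Finset.sum_mul, hα.2, one_mul]
    rw [hA, hB]
  have hcdα : cd * α k = μ k.castSucc - μ k.succ := by linarith [hdiff, heq.le, heq.ge]
  rw [eq_div_iff hcd.ne']
  linarith
end

section
/- If (α, β) is a Nash equilibrium of the threshold-classifier game G^T in which several attack vectors may share the same reward, then (α*, β) is a Nash equilibrium of the reduced game G^{R,T} on distinct reward values, with the same equilibrium payoff pair, where α*_r = Σ_{v : R(v) = r} α_v. -/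
open Finset

/-- A probability distribution supported on the finite set `S ⊆ ℝ`. -/
def IsProbOn (S : Finset ℝ) (μ : ℝ → ℝ) : Prop :=
  (∀ x ∈ S, 0 ≤ μ x) ∧ ∑ x ∈ S, μ x = 1

/-- G^T: attacker's expected payoff. The attacker picks v ∈ V, the defender a
threshold t (classifying v as attacker iff R(v) ≥ θ t). -/
noncomputable def UAT {V T : Type*} [Fintype V] [Fintype T]
    (R : V → ℝ) (θ : T → ℝ) (cd : ℝ) (α : V → ℝ) (β : T → ℝ) : ℝ :=
  ∑ v, ∑ t, α v * (R v - cd * (if θ t ≤ R v then 1 else 0)) * β t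

/-- G^T: defender's expected payoff. -/
noncomputable def UDT {V T : Type*} [Fintype V] [Fintype T]
    (R : V → ℝ) (θ : T → ℝ) (PN : V → ℝ) (cd cfa p : ℝ)
    (α : V → ℝ) (β : T → ℝ) : ℝ :=
  ∑ v, ∑ t, α v *
    (-(R v - cd * (if θ t ≤ R v then 1 else 0))
      - (1 - p) / p * cfa * ∑ v', PN v' * (if θ t ≤ R v' then 1 else 0)) * β t

/-- G^{R,T}: attacker's expected payoff when the attacker mixes over the set of
distinct reward values S = image of R. -/
noncomputable def UAR {T : Type*} [Fintype T] (S : Finset ℝ) (θ : T → ℝ) (cd : ℝ)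
    (α : ℝ → ℝ) (β : T → ℝ) : ℝ :=
  ∑ rr ∈ S, ∑ t, α rr * (rr - cd * (if θ t ≤ rr then 1 else 0)) * β t

/-- G^{R,T}: defender's expected payoff, with reduced non-attacker distribution
`PNR` on the reward values S. -/
noncomputable def UDR {T : Type*} [Fintype T] (S : Finset ℝ) (θ : T → ℝ)
    (PNR : ℝ → ℝ) (cd cfa p : ℝ) (α : ℝ → ℝ) (β : T → ℝ) : ℝ :=
  ∑ rr ∈ S, ∑ t, α rr *
    (-(rr - cd * (if θ t ≤ rr then 1 else 0))
      - (1 - p) / p * cfa * ∑ rr' ∈ S, PNR rr' * (if θ t ≤ rr' then 1 else 0)) * β t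


section Helpers

open Classical in
/-- Fiberwise aggregation: summing a function of the reward over the image
equals summing over the original type. -/
lemma agg_sum {V : Type*} [Fintype V] (R : V → ℝ) (μ : V → ℝ) (F : ℝ → ℝ) :
    ∑ rr ∈ Finset.image R Finset.univ,
      (∑ v ∈ Finset.univ.filter (fun v => R v = rr), μ v) * F rr
      = ∑ v, μ v * F (R v) := by
  classical
  rw [← Finset.sum_fiberwise_of_maps_to (fun v _ => Finset.mem_image_of_mem R (Finset.mem_univ v))
    (fun v => μ v * F (R v))]
  refine Finset.sum_congr rfl (fun r _ => ?_)
  rw [Finset.sum_mul]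
  refine Finset.sum_congr rfl (fun v hv => ?_)
  rw [(Finset.mem_filter.mp hv).2]

lemma UAR_eq_UAT {V T : Type*} [Fintype V] [Fintype T]
    (R : V → ℝ) (θ : T → ℝ) (cd : ℝ) (μ : V → ℝ) (β : T → ℝ) :
    UAR (Finset.image R Finset.univ) θ cd
      (fun rr => ∑ v ∈ Finset.univ.filter (fun v => R v = rr), μ v) β
      = UAT R θ cd μ β := by
  classical
  unfold UAR UAT
  simp_rw [mul_assoc, ← Finset.mul_sum]
  exact agg_sum R μ (fun r => ∑ t, (r - cd * (if θ t ≤ r then 1 else 0)) * β t)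

lemma UDR_eq_UDT {V T : Type*} [Fintype V] [Fintype T]
    (R : V → ℝ) (θ : T → ℝ) (PN : V → ℝ) (cd cfa p : ℝ)
    (μ : V → ℝ) (β : T → ℝ) :
    UDR (Finset.image R Finset.univ) θ
      (fun rr => ∑ v ∈ Finset.univ.filter (fun v => R v = rr), PN v) cd cfa p
      (fun rr => ∑ v ∈ Finset.univ.filter (fun v => R v = rr), μ v) β
      = UDT R θ PN cd cfa p μ β := by
  classical
  have hPN : ∀ t : T,
      ∑ rr' ∈ Finset.image R Finset.univ,
        (∑ v ∈ Finset.univ.filter (fun v => R v = rr'), PN v) *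
          (if θ t ≤ rr' then 1 else 0)
      = ∑ v', PN v' * (if θ t ≤ R v' then 1 else 0) := fun t =>
    agg_sum R PN (fun r => if θ t ≤ r then 1 else 0)
  have h1 : UDR (Finset.image R Finset.univ) θ
      (fun rr => ∑ v ∈ Finset.univ.filter (fun v => R v = rr), PN v) cd cfa p
      (fun rr => ∑ v ∈ Finset.univ.filter (fun v => R v = rr), μ v) β
      = ∑ rr ∈ Finset.image R Finset.univ,
          (∑ v ∈ Finset.univ.filter (fun v => R v = rr), μ v) *
          ∑ t, (-(rr - cd * (if θ t ≤ rr then 1 else 0))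
            - (1 - p) / p * cfa * ∑ v', PN v' * (if θ t ≤ R v' then 1 else 0)) * β t := by
    unfold UDR
    refine Finset.sum_congr rfl fun rr _ => ?_
    rw [Finset.mul_sum]
    refine Finset.sum_congr rfl fun t _ => ?_
    rw [hPN t]; ring
  have h2 : UDT R θ PN cd cfa p μ β
      = ∑ v, μ v * ∑ t, (-(R v - cd * (if θ t ≤ R v then 1 else 0))
            - (1 - p) / p * cfa * ∑ v', PN v' * (if θ t ≤ R v' then 1 else 0)) * β t := by
    unfold UDT
    refine Finset.sum_congr rfl fun v _ => ?_
    rw [Finset.mul_sum]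
    refine Finset.sum_congr rfl fun t _ => ?_
    ring
  rw [h1, h2]
  exact agg_sum R μ _

lemma UAR_congr {T : Type*} [Fintype T] (S : Finset ℝ) (θ : T → ℝ) (cd : ℝ)
    (μ₁ μ₂ : ℝ → ℝ) (β : T → ℝ) (h : ∀ r ∈ S, μ₁ r = μ₂ r) :
    UAR S θ cd μ₁ β = UAR S θ cd μ₂ β := by
  unfold UAR
  refine Finset.sum_congr rfl (fun r hr => ?_)
  simp [h r hr]

end Helpers

/-- if (α, β) is a Nash equilibrium of the threshold-classifier game
G^T, then the aggregated strategy α*_r = Σ_{v : R(v)=r} α_v together with β forms a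
Nash equilibrium of the reduced game G^{R,T} on distinct reward values, with the
same equilibrium payoff pair. -/
theorem reduced_game_equilibrium
    {V T : Type*} [Fintype V] [Fintype T] [DecidableEq V]
    (R : V → ℝ) (θ : T → ℝ) (PN : V → ℝ) (cd cfa p : ℝ)
    (hR : ∀ v, 0 ≤ R v) (hcd : 0 < cd) (hcfa : 0 < cfa) (hp : 0 < p) (hp1 : p < 1)
    (hPN0 : ∀ v, 0 ≤ PN v) (hPN1 : ∑ v, PN v = 1)
    (α : V → ℝ) (β : T → ℝ)
    (hαp : IsProb α) (hβp : IsProb β)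
    (hA : ∀ α', IsProb α' → UAT R θ cd α' β ≤ UAT R θ cd α β)
    (hD : ∀ β', IsProb β' → UDT R θ PN cd cfa p α β' ≤ UDT R θ PN cd cfa p α β) :
    IsProbOn (Finset.image R Finset.univ)
      (fun rr => ∑ v ∈ Finset.univ.filter (fun v => R v = rr), α v) ∧
    (∀ α'', IsProbOn (Finset.image R Finset.univ) α'' →
      UAR (Finset.image R Finset.univ) θ cd α'' β ≤
      UAR (Finset.image R Finset.univ) θ cd
        (fun rr => ∑ v ∈ Finset.univ.filter (fun v => R v = rr), α v) β) ∧
    (∀ β', IsProb β' →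
      UDR (Finset.image R Finset.univ) θ
        (fun rr => ∑ v ∈ Finset.univ.filter (fun v => R v = rr), PN v) cd cfa p
        (fun rr => ∑ v ∈ Finset.univ.filter (fun v => R v = rr), α v) β' ≤
      UDR (Finset.image R Finset.univ) θ
        (fun rr => ∑ v ∈ Finset.univ.filter (fun v => R v = rr), PN v) cd cfa p
        (fun rr => ∑ v ∈ Finset.univ.filter (fun v => R v = rr), α v) β) ∧
    UAR (Finset.image R Finset.univ) θ cd
      (fun rr => ∑ v ∈ Finset.univ.filter (fun v => R v = rr), α v) β
      = UAT R θ cd α β ∧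
    UDR (Finset.image R Finset.univ) θ
      (fun rr => ∑ v ∈ Finset.univ.filter (fun v => R v = rr), PN v) cd cfa p
      (fun rr => ∑ v ∈ Finset.univ.filter (fun v => R v = rr), α v) β
      = UDT R θ PN cd cfa p α β := by
  
  classical
  set S := Finset.image R Finset.univ with hS
  -- V is nonempty
  have hneV : Nonempty V := by
    by_contra h
    rw [not_nonempty_iff] at h
    have := hαp.2
    simp [Finset.univ_eq_empty] at this
  -- the aggregated strategy is a probability on S
  have hsumfib : ∀ μ : V → ℝ,
      ∑ rr ∈ S, ∑ v ∈ Finset.univ.filter (fun v => R v = rr), μ v = ∑ v, μ v :=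
    fun μ => Finset.sum_fiberwise_of_maps_to
      (fun v _ => Finset.mem_image_of_mem R (Finset.mem_univ v)) μ
  have hprob : IsProbOn S (fun rr => ∑ v ∈ Finset.univ.filter (fun v => R v = rr), α v) := by
    constructor
    · intro r _
      exact Finset.sum_nonneg fun v _ => hαp.1 v
    · rw [hsumfib]; exact hαp.2
  refine ⟨hprob, ?_, ?_, UAR_eq_UAT R θ cd α β, UDR_eq_UDT R θ PN cd cfa p α β⟩
  · -- attacker optimality
    intro α'' hα''
    -- pick a representative in each fiber
    obtain ⟨v₀⟩ := hneV
    set rep : ℝ → V := fun r => if h : ∃ v, R v = r then h.choose else v₀ with hrep_def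
    have hrep : ∀ r ∈ S, R (rep r) = r := by
      intro r hr
      obtain ⟨v, -, hv⟩ := Finset.mem_image.mp hr
      have h : ∃ v, R v = r := ⟨v, hv⟩
      simp only [hrep_def, dif_pos h]
      exact h.choose_spec
    set α' : V → ℝ := fun v => if rep (R v) = v then α'' (R v) else 0 with hα'_def
    have hmemS : ∀ v : V, R v ∈ S := fun v =>
      Finset.mem_image_of_mem R (Finset.mem_univ v)
    have hfiber : ∀ r ∈ S,
        ∑ v ∈ Finset.univ.filter (fun v => R v = r), α' v = α'' r := by
      intro r hr
      have hmem : rep r ∈ Finset.univ.filter (fun v => R v = r) := by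
        simp [hrep r hr]
      rw [Finset.sum_eq_single_of_mem (rep r) hmem]
      · simp [hα'_def, hrep r hr]
      · intro v hv hvne
        have hRv : R v = r := (Finset.mem_filter.mp hv).2
        simp only [hα'_def, hRv]
        rw [if_neg (fun h => hvne h.symm)]
    have hα'p : IsProb α' := by
      constructor
      · intro v
        simp only [hα'_def]
        split
        · exact hα''.1 _ (hmemS v)
        · exact le_rfl
      · rw [← hsumfib α']
        rw [Finset.sum_congr rfl hfiber]
        exact hα''.2
    calc UAR S θ cd α'' β
        = UAR S θ cd (fun rr => ∑ v ∈ Finset.univ.filter (fun v => R v = rr), α' v) β :=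
          (UAR_congr S θ cd _ _ β hfiber).symm
      _ = UAT R θ cd α' β := UAR_eq_UAT R θ cd α' β
      _ ≤ UAT R θ cd α β := hA α' hα'p
      _ = UAR S θ cd (fun rr => ∑ v ∈ Finset.univ.filter (fun v => R v = rr), α v) β :=
          (UAR_eq_UAT R θ cd α β).symm
  · -- defender optimality
    intro β' hβ'
    calc UDR S θ (fun rr => ∑ v ∈ Finset.univ.filter (fun v => R v = rr), PN v) cd cfa p
          (fun rr => ∑ v ∈ Finset.univ.filter (fun v => R v = rr), α v) β'
        = UDT R θ PN cd cfa p α β' := UDR_eq_UDT R θ PN cd cfa p α β'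
      _ ≤ UDT R θ PN cd cfa p α β := hD β' hβ'
      _ = UDR S θ (fun rr => ∑ v ∈ Finset.univ.filter (fun v => R v = rr), PN v) cd cfa p
          (fun rr => ∑ v ∈ Finset.univ.filter (fun v => R v = rr), α v) β :=
          (UDR_eq_UDT R θ PN cd cfa p α β).symm
end
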